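/- Let n ≥ 1 be an integer, M > 0, and let φ : ℝⁿ → ℝ satisfy |φ(x)−φ(y)| ≤ M|x−y| for all x,y ∈ ℝⁿ. Let x₀ ∈ ℝⁿ and set Q₀ = (φ(x₀), x₀) ∈ ∂Ω_φ. Then for every β ∈ (0,1] and every c > 0, and for every point (t,x) ∈ Γ^{β,c}_{Ω_φ}(Q₀), setting σ = t − φ(x) (so σ > 0), one has (σ, x) ∈ Γ^β_{1+c}(x₀); that is, |x − x₀| < (1+c)·σ^β if 0 < σ ≤ 1, and |x − x₀| < (1+c)·σ if σ ≥ 1. Equivalently, Γ^{β,c}_{Ω_φ}(Q₀) ⊆ F_φ^{-1}( Γ^β_{1+c}(x₀) ), where F_φ(t,x) = (t − φ(x), x). -/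

import Mathlib

open MeasureTheory Metric Set
open scoped ENNReal NNReal

/-- `ℝ^{1+n} = ℝ × ℝⁿ` with the Euclidean (L²) norm. -/
noncomputable abbrev UHS (n : ℕ) := WithLp 2 (ℝ × EuclideanSpace ℝ (Fin n))

noncomputable def mkH (n : ℕ) (t : ℝ) (x : EuclideanSpace ℝ (Fin n)) : UHS n :=
  (WithLp.equiv 2 (ℝ × EuclideanSpace ℝ (Fin n))).symm (t, x)

noncomputable def fstH {n : ℕ} (X : UHS n) : ℝ :=
  ((WithLp.equiv 2 (ℝ × EuclideanSpace ℝ (Fin n))) X).1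

noncomputable def sndH {n : ℕ} (X : UHS n) : EuclideanSpace ℝ (Fin n) :=
  ((WithLp.equiv 2 (ℝ × EuclideanSpace ℝ (Fin n))) X).2

/-- The special Lipschitz domain `Ω_φ = {(t,x) : t > φ(x)}`. -/
def specialDomain (n : ℕ) (φ : EuclideanSpace ℝ (Fin n) → ℝ) : Set (UHS n) :=
  {X | φ (sndH X) < fstH X}

/-- The tangential approach region `Γ^{β,c}_Ω(X₀)`. -/
noncomputable def tangRegion {E : Type*} [NormedAddCommGroup E]
    (Ω : Set E) (X₀ : E) (β c : ℝ) : Set E :=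
  {X | X ∈ Ω ∧
    (Metric.infDist X (frontier Ω) ≤ 1 →
      dist X X₀ < (1 + c) * Metric.infDist X (frontier Ω) ^ β) ∧
    (1 ≤ Metric.infDist X (frontier Ω) →
      dist X X₀ < (1 + c) * Metric.infDist X (frontier Ω))}

/-- The tangential approach region `Γ^β_a(x₀)` in the upper half-space
`(0,∞) × ℝⁿ`. -/
noncomputable def upperRegion (n : ℕ) (β a : ℝ) (x₀ : EuclideanSpace ℝ (Fin n)) :
    Set (ℝ × EuclideanSpace ℝ (Fin n)) :=
  {tx | 0 < tx.1 ∧ (tx.1 ≤ 1 → ‖tx.2 - x₀‖ < a * tx.1 ^ β) ∧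
    (1 ≤ tx.1 → ‖tx.2 - x₀‖ < a * tx.1)}

lemma distH (n : ℕ) (X Y : UHS n) :
    dist X Y = Real.sqrt (dist (fstH X) (fstH Y) ^ 2 + dist (sndH X) (sndH Y) ^ 2) :=
  WithLp.prod_dist_eq_of_L2 X Y

theorem statement18 (n : ℕ) (hn : 1 ≤ n) (M : ℝ) (hM : 0 < M)
    (φ : EuclideanSpace ℝ (Fin n) → ℝ)
    (hφ : ∀ x y : EuclideanSpace ℝ (Fin n), |φ x - φ y| ≤ M * ‖x - y‖)
    (x₀ : EuclideanSpace ℝ (Fin n)) (β c : ℝ) (hβ : 0 < β) (hβ1 : β ≤ 1) (hc : 0 < c) :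
    ∀ X ∈ tangRegion (specialDomain n φ) (mkH n (φ x₀) x₀) β c,
      0 < fstH X - φ (sndH X) ∧
      (fstH X - φ (sndH X), sndH X) ∈ upperRegion n β (1 + c) x₀ := by
  intro X hX
  obtain ⟨hXΩ, h1, h2⟩ := hX
  set t := fstH X with ht
  set x := sndH X with hx
  have hσ : 0 < t - φ x := sub_pos.mpr hXΩ
  set σ := t - φ x with hσdef
  -- φ is continuous
  have hφlip : LipschitzWith ⟨M, hM.le⟩ φ := by
    apply LipschitzWith.of_dist_le_mul
    intro a b
    rw [Real.dist_eq, dist_eq_norm]; exact hφ a b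
  have hφcont : Continuous φ := hφlip.continuous
  have hcontf : Continuous (fstH (n := n)) :=
    continuous_fst.comp (WithLp.prod_continuous_ofLp _ _ _)
  have hconts : Continuous (sndH (n := n)) :=
    continuous_snd.comp (WithLp.prod_continuous_ofLp _ _ _)
  have hopen : IsOpen (specialDomain n φ) :=
    isOpen_lt (hφcont.comp hconts) hcontf
  -- the vertical projection to the boundary
  set Y := mkH n (φ x) x with hY
  have hYfst : fstH Y = φ x := rfl
  have hYsnd : sndH Y = x := rfl
  have hYfr : Y ∈ frontier (specialDomain n φ) := by
    rw [hopen.frontier_eq]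
    constructor
    · rw [Metric.mem_closure_iff]
      intro ε hε
      refine ⟨mkH n (φ x + ε / 2) x, by simp [specialDomain, mkH, fstH, sndH, hε], ?_⟩
      rw [distH]
      have e1 : dist (fstH Y) (fstH (mkH n (φ x + ε / 2) x)) = ε / 2 := by
        show dist (φ x) (φ x + ε / 2) = ε / 2
        rw [Real.dist_eq, abs_of_nonpos] <;> linarith
      have e2 : dist (sndH Y) (sndH (mkH n (φ x + ε / 2) x)) = 0 := by
        show dist x x = 0; simp
      rw [e1, e2, show (ε/2)^2 + (0:ℝ)^2 = (ε/2)^2 by ring, Real.sqrt_sq (by linarith)]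
      linarith
    · show ¬ (φ (sndH Y) < fstH Y)
      rw [hYfst, hYsnd]
      exact lt_irrefl _
  -- distance to the vertical boundary point
  have hdXY : dist X Y = σ := by
    rw [distH]
    have e1 : dist (fstH X) (fstH Y) = σ := by
      show dist t (φ x) = σ
      rw [Real.dist_eq, abs_of_pos hσ]
    have e2 : dist (sndH X) (sndH Y) = 0 := by show dist x x = 0; simp
    rw [e1, e2, show σ^2 + (0:ℝ)^2 = σ^2 by ring, Real.sqrt_sq hσ.le]
  set d := Metric.infDist X (frontier (specialDomain n φ)) with hd
  have hdσ : d ≤ σ := hdXY ▸ Metric.infDist_le_dist_of_mem hYfr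
  have hd0 : 0 ≤ d := Metric.infDist_nonneg
  -- ‖x - x₀‖ is at most the full distance
  have hlow : ‖x - x₀‖ ≤ dist X (mkH n (φ x₀) x₀) := by
    rw [distH]
    have e2 : dist (sndH X) (sndH (mkH n (φ x₀) x₀)) = ‖x - x₀‖ := by
      show dist x x₀ = ‖x - x₀‖; rw [dist_eq_norm]
    rw [e2]
    calc ‖x - x₀‖ = Real.sqrt (‖x - x₀‖^2) := (Real.sqrt_sq (norm_nonneg _)).symm
      _ ≤ _ := Real.sqrt_le_sqrt (le_add_of_nonneg_left (sq_nonneg _))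
  have hcpos : (0:ℝ) < 1 + c := by linarith
  refine ⟨hσ, hσ, ?_, ?_⟩
  · intro hσ1
    have hd1 : d ≤ 1 := le_trans hdσ hσ1
    have := h1 hd1
    calc ‖x - x₀‖ ≤ dist X (mkH n (φ x₀) x₀) := hlow
      _ < (1 + c) * d ^ β := this
      _ ≤ (1 + c) * σ ^ β := by
          exact mul_le_mul_of_nonneg_left (Real.rpow_le_rpow hd0 hdσ hβ.le) hcpos.le
  · intro hσ1
    rcases le_or_gt d 1 with hd1 | hd1
    · calc ‖x - x₀‖ ≤ dist X (mkH n (φ x₀) x₀) := hlow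
        _ < (1 + c) * d ^ β := h1 hd1
        _ ≤ (1 + c) * 1 := by
            exact mul_le_mul_of_nonneg_left (Real.rpow_le_one hd0 hd1 hβ.le) hcpos.le
        _ ≤ (1 + c) * σ := by nlinarith
    · calc ‖x - x₀‖ ≤ dist X (mkH n (φ x₀) x₀) := hlow
        _ < (1 + c) * d := h2 hd1.le
        _ ≤ (1 + c) * σ := by gcongr
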